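/- Let n ≥ 2 and let s be an integer with 1 ≤ s ≤ n−1. If S is a non-transitive subset of S_n whose covering radius is at most n−s (i.e., for every ρ ∈ S_n there exists σ ∈ S with d_H(ρ,σ) ≤ n−s), then f(n−1,s) ≤ |S|. -/

import Mathlib

/-- Hamming distance between two permutations of `Fin n`:
the number of points where they disagree. -/
def permHammingDist {n : ℕ} (ρ σ : Equiv.Perm (Fin n)) : ℕ :=
  (Finset.univ.filter (fun i => ρ i ≠ σ i)).card

/-- `covers S r` means the set `S` of permutations has covering radius at most `r`. -/
def covers {n : ℕ} (S : Finset (Equiv.Perm (Fin n))) (r : ℕ) : Prop :=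
  ∀ ρ : Equiv.Perm (Fin n), ∃ σ ∈ S, permHammingDist ρ σ ≤ r

/-- `f n s` is the minimum size of a subset of `S_n` with covering radius at most `n - s`. -/
noncomputable def f (n s : ℕ) : ℕ :=
  sInf {k | ∃ S : Finset (Equiv.Perm (Fin n)), S.card = k ∧ covers S (n - s)}

open Equiv Equiv.Perm Finset

lemma permHammingDist_conj {n : ℕ} (a b ρ σ : Equiv.Perm (Fin n)) :
    permHammingDist (b * ρ * a) (b * σ * a) = permHammingDist ρ σ := by
  unfold permHammingDist
  apply Finset.card_bij' (fun i _ => a i) (fun i _ => a⁻¹ i)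
  · intro i hi
    rw [Finset.mem_filter] at hi ⊢
    simp only [Finset.mem_coe, Finset.mem_filter, Finset.mem_univ, true_and, Perm.mul_apply] at hi ⊢
    intro h
    exact hi (by rw [h])
  · intro i hi
    rw [Finset.mem_filter] at hi ⊢
    simp only [Finset.mem_coe, Finset.mem_filter, Finset.mem_univ, true_and, Perm.mul_apply] at hi ⊢
    intro h
    apply hi
    have := b.injective h
    simpa using this
  · intro i _; simp
  · intro i _; simp

lemma permHammingDist_key {n : ℕ} (ρ σ : Equiv.Perm (Fin n)) (x : Fin n)
    (hne : σ x ≠ ρ x) :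
    permHammingDist ρ (Equiv.swap (ρ x) (σ x) * σ) + 1 ≤ permHammingDist ρ σ := by
  unfold permHammingDist
  have hsub : (Finset.univ.filter (fun i => ρ i ≠ (Equiv.swap (ρ x) (σ x) * σ) i)) ⊆
      (Finset.univ.filter (fun i => ρ i ≠ σ i)).erase x := by
    intro i hi
    rw [Finset.mem_filter] at hi
    simp only [Finset.mem_coe, Finset.mem_filter, Finset.mem_univ, true_and, Perm.mul_apply] at hi
    rw [Finset.mem_erase]
    constructor
    · rintro rfl
      exact hi (by rw [Equiv.swap_apply_right])
    · simp only [Finset.mem_coe, Finset.mem_filter, Finset.mem_univ, true_and]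
      intro h
      apply hi
      have hix : i ≠ x := by rintro rfl; exact hne h.symm
      have h1 : σ i ≠ ρ x := by rw [← h]; exact fun hh => hix (ρ.injective hh)
      have h2 : σ i ≠ σ x := fun hh => hix (σ.injective hh)
      rw [Equiv.swap_apply_of_ne_of_ne h1 h2]
      exact h
  have hx : x ∈ Finset.univ.filter (fun i => ρ i ≠ σ i) := by
    simp only [Finset.mem_coe, Finset.mem_filter, Finset.mem_univ, true_and]
    exact fun h => hne h.symm
  calc (Finset.univ.filter (fun i => ρ i ≠ (Equiv.swap (ρ x) (σ x) * σ) i)).card + 1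
      ≤ ((Finset.univ.filter (fun i => ρ i ≠ σ i)).erase x).card + 1 :=
        by exact Nat.add_le_add_right (Finset.card_le_card hsub) 1
    _ = (Finset.univ.filter (fun i => ρ i ≠ σ i)).card := by
        rw [Finset.card_erase_of_mem hx]
        exact Nat.succ_pred_eq_of_pos (Finset.card_pos.mpr ⟨x, hx⟩)
        
lemma permHammingDist_restrict {m : ℕ} (e e2 : Equiv.Perm (Fin m)) :
    permHammingDist e e2 ≤
      permHammingDist (Equiv.Perm.decomposeFin.symm (0, e))
        (Equiv.Perm.decomposeFin.symm (0, e2)) := by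
  unfold permHammingDist
  apply Finset.card_le_card_of_injOn (fun i => Fin.succ i)
  · intro i hi
    simp only [Finset.mem_coe, Finset.mem_filter, Finset.mem_univ, true_and] at hi ⊢
    rw [Equiv.Perm.decomposeFin_symm_apply_succ, Equiv.Perm.decomposeFin_symm_apply_succ]
    simp only [Equiv.swap_self, Equiv.refl_apply]
    exact fun h => hi (Fin.succ_injective _ h)
  · exact fun i _ j _ h => Fin.succ_injective _ h

theorem stmt0 (n s : ℕ) (hn : 2 ≤ n) (hs1 : 1 ≤ s) (hs2 : s ≤ n - 1)
    (S : Finset (Equiv.Perm (Fin n)))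
    (hnontrans : ¬ ∀ x y : Fin n, ∃ σ ∈ S, σ x = y)
    (hcov : covers S (n - s)) :
    f (n - 1) s ≤ S.card := by
  obtain ⟨m, rfl⟩ : ∃ m, n = m + 1 := ⟨n - 1, by omega⟩
  simp only [Nat.add_sub_cancel] at hs2 ⊢
  push_neg at hnontrans
  obtain ⟨x, y, hxy⟩ := hnontrans
  set a : Equiv.Perm (Fin (m + 1)) := Equiv.swap x 0 with ha
  set b : Equiv.Perm (Fin (m + 1)) := Equiv.swap y 0 with hb
  set g : Equiv.Perm (Fin (m + 1)) → Equiv.Perm (Fin m) := fun σ =>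
    (Equiv.Perm.decomposeFin (b * (Equiv.swap y (σ x) * σ) * a)).2 with hg
  have hcov' : covers (S.image g) (m - s) := by
    intro e
    set ρ' : Equiv.Perm (Fin (m + 1)) := Equiv.Perm.decomposeFin.symm (0, e) with hρ'
    set ρ : Equiv.Perm (Fin (m + 1)) := b * ρ' * a with hρ
    have hρx : ρ x = y := by
      simp only [hρ, Perm.mul_apply, ha, hb]
      rw [Equiv.swap_apply_left, hρ', Equiv.Perm.decomposeFin_symm_apply_zero,
        Equiv.swap_apply_right]
    obtain ⟨σ, hσS, hd⟩ := hcov ρ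
    have hne : σ x ≠ ρ x := by rw [hρx]; exact hxy σ hσS
    have hkey := permHammingDist_key ρ σ x hne
    set σ₂ : Equiv.Perm (Fin (m + 1)) := Equiv.swap y (σ x) * σ with hσ₂
    have hkey' : permHammingDist ρ σ₂ + 1 ≤ m + 1 - s := by
      rw [hσ₂, ← hρx]; exact le_trans hkey hd
    set sh : Equiv.Perm (Fin (m + 1)) := b * σ₂ * a with hsh
    have hρ'eq : ρ' = b * ρ * a := by
      rw [hρ]
      ext i
      simp [ha, hb, Perm.mul_apply]
    have hdist : permHammingDist ρ' sh ≤ m + 1 - s - 1 := by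
      rw [hρ'eq, hsh, permHammingDist_conj]
      omega
    have hsh0 : sh 0 = 0 := by
      simp only [hsh, Perm.mul_apply, ha, hb, hσ₂]
      rw [Equiv.swap_apply_right, Equiv.swap_apply_right, Equiv.swap_apply_left]
    have hfst : (Equiv.Perm.decomposeFin sh).1 = 0 := by
      have := Equiv.Perm.decomposeFin.symm_apply_apply sh
      conv_lhs at hsh0 =>
        rw [← this, show Equiv.Perm.decomposeFin sh =
          ((Equiv.Perm.decomposeFin sh).1, (Equiv.Perm.decomposeFin sh).2) from rfl]
        rw [Equiv.Perm.decomposeFin_symm_apply_zero]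
      exact hsh0
    have hsheq : Equiv.Perm.decomposeFin.symm (0, (Equiv.Perm.decomposeFin sh).2) = sh := by
      conv_rhs => rw [← Equiv.Perm.decomposeFin.symm_apply_apply sh]
      rw [show Equiv.Perm.decomposeFin sh =
        ((Equiv.Perm.decomposeFin sh).1, (Equiv.Perm.decomposeFin sh).2) from rfl, hfst]
    refine ⟨g σ, Finset.mem_image_of_mem g hσS, ?_⟩
    have hgσ : g σ = (Equiv.Perm.decomposeFin sh).2 := rfl
    rw [hgσ]
    have hrest := permHammingDist_restrict e (Equiv.Perm.decomposeFin sh).2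
    rw [hsheq, ← hρ'] at hrest
    calc permHammingDist e (Equiv.Perm.decomposeFin sh).2 ≤ permHammingDist ρ' sh := hrest
      _ ≤ m + 1 - s - 1 := hdist
      _ ≤ m - s := by omega
  calc f m s ≤ (S.image g).card := Nat.sInf_le ⟨S.image g, rfl, hcov'⟩
    _ ≤ S.card := Finset.card_image_le
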